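/- For every l ≥ 5, define f̃_{D_l}(t) := ((l+2)/l)·f_{D_l}(t) − (2/l)·f_{B_l}(t) in ℚ[t], where f_{B_l}(t) = Σ_{k=0}^{l} (-1)^k C(l,k)·C(l+k,k)·t^k and f_{D_l}(t) = Σ_{k=0}^{l} (-1)^k (C(l,k)·C(l+k-1,k) + C(l-2,k-2)·C(l+k-2,k))·t^k. Then f̃_{D_l}(t) = (1/(l-2)!)·d^{l-3}/dt^{l-3}[t^{l-3}(1-t)^{l-3}(1-2t)·((l-2) − (3l-4)t + (3l-4)t²)]. -/

import Mathlib

open Polynomial Finset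

noncomputable def cc (x : ℚ) : ℕ → ℚ
  | 0 => x - 2
  | 1 => -(3*x - 4) - 2*(x - 2)
  | 2 => 3*(3*x - 4)
  | 3 => -(2*(3*x - 4))
  | _ => 0

noncomputable def eD (l k : ℕ) : ℚ :=
  (-1:ℚ)^k * ( (((l:ℚ)+2)/l) * ((l.choose k : ℚ) * ((l+k-1).choose k : ℚ)
      + (if 2 ≤ k then ((l-2).choose (k-2) : ℚ) * ((l+k-2).choose k : ℚ) else 0))
    - (2/(l:ℚ)) * ((l.choose k : ℚ) * ((l+k).choose k : ℚ)) )

lemma fact_ne (n : ℕ) : ((n.factorial : ℕ) : ℚ) ≠ 0 :=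
  Nat.cast_ne_zero.mpr (Nat.factorial_ne_zero n)

lemma fact_chain (a : ℕ) : ((a+1).factorial : ℚ) = (a+1) * (a.factorial : ℚ) := by
  rw [Nat.factorial_succ]; push_cast; ring

lemma desc_cast {a b : ℕ} (h : b ≤ a) :
    ((a.descFactorial b : ℕ) : ℚ) = (a.factorial : ℚ) / (((a-b).factorial : ℕ) : ℚ) := by
  rw [Nat.descFactorial_eq_factorial_mul_choose, Nat.cast_mul, Nat.cast_choose ℚ h]
  have := fact_ne b
  have := fact_ne (a-b)
  field_simp

lemma fact_shift (a : ℕ) : ∀ b : ℕ, ((a+b).factorial : ℚ)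
    = (a.factorial : ℚ) * ∏ t ∈ Finset.range b, ((a:ℚ)+t+1)
  | 0 => by simp
  | (b+1) => by
      rw [show a+(b+1) = (a+b)+1 from rfl, fact_chain, fact_shift a b, Finset.prod_range_succ]
      push_cast
      ring

lemma coeff_sum_CX (n : ℕ) (f : ℕ → ℚ) (k : ℕ) :
    (∑ i ∈ Finset.range n, Polynomial.C (f i) * Polynomial.X ^ i).coeff k
      = if k < n then f k else 0 := by
  rw [Polynomial.finset_sum_coeff]
  simp only [Polynomial.coeff_C_mul, Polynomial.coeff_X_pow, mul_ite, mul_one, mul_zero]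
  rw [Finset.sum_ite_eq (Finset.range n) k f]
  simp [Finset.mem_range]

lemma cubic_eq (x : ℚ) :
    (1 - 2 * Polynomial.X) *
      (Polynomial.C (x - 2) - Polynomial.C (3*x - 4) * Polynomial.X
        + Polynomial.C (3*x - 4) * Polynomial.X ^ 2)
    = ∑ j ∈ Finset.range 4, Polynomial.C (cc x j) * Polynomial.X ^ j := by
  simp only [Finset.sum_range_succ, Finset.range_one, Finset.sum_singleton, cc]
  simp only [map_sub, map_neg, map_add, map_mul, map_ofNat]
  ring

lemma one_sub_X_pow (m : ℕ) :
    ((1 : Polynomial ℚ) - Polynomial.X) ^ m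
      = ∑ i ∈ Finset.range (m+1),
          Polynomial.C ((-1:ℚ)^i * (m.choose i)) * Polynomial.X ^ i := by
  rw [sub_eq_add_neg, add_comm, add_pow]
  refine Finset.sum_congr rfl fun i _ => ?_
  rw [← Polynomial.C_eq_natCast]
  rw [neg_pow]
  simp only [one_pow, mul_one, Polynomial.C_mul]
  rw [show ((-1:Polynomial ℚ))^i = Polynomial.C ((-1:ℚ)^i) by simp]
  ring

lemma inner_eq (x : ℚ) (m : ℕ) :
    Polynomial.X ^ m * (1 - Polynomial.X) ^ m * (1 - 2 * Polynomial.X) *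
      (Polynomial.C (x - 2) - Polynomial.C (3*x - 4) * Polynomial.X
        + Polynomial.C (3*x - 4) * Polynomial.X ^ 2)
    = ∑ i ∈ Finset.range (m+1), ∑ j ∈ Finset.range 4,
        Polynomial.C ((-1:ℚ)^i * (m.choose i) * cc x j) * Polynomial.X ^ (i + j + m) := by
  rw [mul_assoc (Polynomial.X ^ m * _), cubic_eq, one_sub_X_pow, mul_assoc, Finset.sum_mul_sum]
  rw [Finset.mul_sum]
  refine Finset.sum_congr rfl fun i _ => ?_
  rw [Finset.mul_sum]
  refine Finset.sum_congr rfl fun j _ => ?_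
  simp only [Polynomial.C_mul]
  ring

lemma sum_ite_shift (N j k : ℕ) (f : ℕ → ℚ) :
    (∑ i ∈ Finset.range N, if k = i + j then f i else 0)
      = if j ≤ k ∧ k - j < N then f (k - j) else 0 := by
  by_cases hj : j ≤ k
  · have h : ∀ i : ℕ, (k = i + j) = (k - j = i) := fun i => by
      apply propext; omega
    simp_rw [h]
    rw [Finset.sum_ite_eq]
    simp [Finset.mem_range, hj]
  · have h : ∀ i : ℕ, ¬(k = i + j) := fun i => by omega
    simp [h, hj]

lemma coeff_double (m k : ℕ) (g : ℕ → ℕ → ℚ) :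
    (∑ i ∈ Finset.range (m+1), ∑ j ∈ Finset.range 4,
        Polynomial.C (g i j) * Polynomial.X ^ (i+j)).coeff k
      = ∑ j ∈ Finset.range 4, if j ≤ k ∧ k - j < m+1 then g (k-j) j else 0 := by
  rw [Polynomial.finset_sum_coeff]
  simp_rw [Polynomial.finset_sum_coeff, Polynomial.coeff_C_mul, Polynomial.coeff_X_pow,
    mul_ite, mul_one, mul_zero]
  rw [Finset.sum_comm]
  exact Finset.sum_congr rfl fun j _ => sum_ite_shift (m+1) j k (fun i => g i j)

noncomputable def fB (l : ℕ) : Polynomial ℚ :=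
  ∑ k ∈ Finset.range (l + 1),
    Polynomial.C ((-1 : ℚ) ^ k * (l.choose k) * ((l + k).choose k)) * Polynomial.X ^ k
noncomputable def fD (l : ℕ) : Polynomial ℚ :=
  ∑ k ∈ Finset.range (l + 1),
    Polynomial.C ((-1 : ℚ) ^ k *
      ((l.choose k * (l + k - 1).choose k
        + if 2 ≤ k then (l - 2).choose (k - 2) * (l + k - 2).choose k else 0 : ℕ) : ℚ)) *
      Polynomial.X ^ k

noncomputable def fDtilde (l : ℕ) : Polynomial ℚ :=
  Polynomial.C (((l : ℚ) + 2) / (l : ℚ)) * fD l - Polynomial.C (2 / (l : ℚ)) * fB l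

lemma fDtilde_sum (l : ℕ) :
    fDtilde l = ∑ k ∈ Finset.range (l+1), Polynomial.C (eD l k) * Polynomial.X ^ k := by
  unfold fDtilde fB fD
  rw [Finset.mul_sum, Finset.mul_sum, ← Finset.sum_sub_distrib]
  refine Finset.sum_congr rfl fun k _ => ?_
  rw [← mul_assoc, ← mul_assoc, ← Polynomial.C_mul, ← Polynomial.C_mul, ← sub_mul,
    ← Polynomial.C_sub]
  congr 1
  unfold eD
  push_cast [apply_ite (Nat.cast : ℕ → ℚ)]
  by_cases h : 2 ≤ k <;> simp [h] <;> ring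

set_option maxHeartbeats 6400000 in
lemma key (l k : ℕ) (hl : 5 ≤ l) :
    (if k < l + 1 then eD l k else 0)
      = 1 / ((l-2).factorial : ℚ) * ∑ j ∈ Finset.range 4,
          if j ≤ k ∧ k - j < l - 3 + 1 then
            (-1:ℚ)^(k-j) * (((l-3).choose (k-j) : ℕ) : ℚ) * cc (l:ℚ) j
              * ((((k-j) + j + (l-3)).descFactorial (l-3) : ℕ) : ℚ)
          else 0 := by
  rw [Finset.sum_range_succ, Finset.sum_range_succ, Finset.sum_range_succ, Finset.sum_range_one]
  rcases lt_or_ge l k with h | h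
  · rw [if_neg (by omega), if_neg (by omega), if_neg (by omega), if_neg (by omega),
      if_neg (by omega)]
    ring
  · rw [if_pos (by omega)]
    by_cases hk3 : k ≤ l - 3
    · match k, hk3 with
      | 0, _ =>
        rw [if_pos (by omega), if_neg (by omega), if_neg (by omega), if_neg (by omega)]
        obtain ⟨r, rfl⟩ : ∃ r, l = r + 5 := ⟨l - 5, by omega⟩
        simp only [eD, cc]
        norm_num
        rw [show (r+5)-3 = r+2 by omega, show (r+5)-2 = r+3 by omega,
          Nat.descFactorial_self, show r+3 = (r+2)+1 from rfl, fact_chain]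
        have h1 := fact_ne (r+2)
        have h2 : ((r:ℚ)+5) ≠ 0 := by positivity
        push_cast
        field_simp
        ring_nf
      | 1, _ =>
        rw [if_pos (by omega), if_pos (by omega), if_neg (by omega), if_neg (by omega)]
        obtain ⟨r, rfl⟩ : ∃ r, l = r + 5 := ⟨l - 5, by omega⟩
        simp only [eD, cc]
        norm_num
        rw [show (r+5)-3 = r+2 by omega, show (r+5)-2 = r+3 by omega]
        rw [show 1 + (r+2) = r+3 by omega, desc_cast (show r+2 ≤ r+3 by omega),
          show r+3 - (r+2) = 1 by omega, Nat.factorial_one,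
          show r+3 = (r+2)+1 from rfl, fact_chain]
        have h1 := fact_ne (r+2)
        have h2 : ((r:ℚ)+5) ≠ 0 := by positivity
        push_cast
        field_simp
        ring
      | 2, _ =>
        rw [if_pos (by omega), if_pos (by omega), if_pos (by omega), if_neg (by omega)]
        obtain ⟨r, rfl⟩ : ∃ r, l = r + 5 := ⟨l - 5, by omega⟩
        simp only [eD, cc]
        norm_num
        rw [show (r+5)-3 = r+2 by omega, show (r+5)-2 = r+3 by omega,
          show r+5+2 = r+7 by omega, show 2+(r+2) = r+4 by omega,
          Nat.cast_choose ℚ (show 2 ≤ r+5 by omega), Nat.cast_choose ℚ (show 2 ≤ r+6 by omega),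
          Nat.cast_choose ℚ (show 2 ≤ r+7 by omega), Nat.cast_choose ℚ (show 2 ≤ r+2 by omega),
          desc_cast (show r+2 ≤ r+4 by omega),
          show r+5-2 = r+3 by omega, show r+6-2 = r+4 by omega, show r+7-2 = r+5 by omega,
          show r+2-2 = r by omega, show r+4-(r+2) = 2 by omega]
        simp only [fact_shift, Finset.prod_range_succ, Finset.prod_range_zero]
        have h1 := fact_ne r
        have h2 : ((r:ℚ)+5) ≠ 0 := by positivity
        have h3 : ((r:ℚ)+1) ≠ 0 := by positivity
        have h4 : ((r:ℚ)+2) ≠ 0 := by positivity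
        have h5 : ((r:ℚ)+3) ≠ 0 := by positivity
        have h6 : ((r:ℚ)+4) ≠ 0 := by positivity
        have h7 : ((r:ℚ)+6) ≠ 0 := by positivity
        have h8 : ((r:ℚ)+7) ≠ 0 := by positivity
        push_cast
        field_simp
        ring
      | (n+3), hk3 =>
        rw [if_pos (by omega), if_pos (by omega), if_pos (by omega), if_pos (by omega)]
        obtain ⟨r, rfl⟩ : ∃ r, l = n + r + 6 := ⟨l - n - 6, by omega⟩
        have a1 := fact_ne n
        have a2 := fact_ne r
        have a3 := fact_ne (n+r)
        have a4 := fact_ne (2*n+r)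
        have a5 := fact_ne (n+r+4)
        have b1 : ((n:ℚ)+1) ≠ 0 := by positivity
        have b2 : ((n:ℚ)+2) ≠ 0 := by positivity
        have b3 : ((n:ℚ)+3) ≠ 0 := by positivity
        have c1 : ((r:ℚ)+1) ≠ 0 := by positivity
        have c2 : ((r:ℚ)+2) ≠ 0 := by positivity
        have c3 : ((r:ℚ)+3) ≠ 0 := by positivity
        have d4 : ((n:ℚ)+(r:ℚ)+4) ≠ 0 := by positivity
        have d5 : ((n:ℚ)+(r:ℚ)+5) ≠ 0 := by positivity
        have d6 : ((n:ℚ)+(r:ℚ)+6) ≠ 0 := by positivity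
        simp only [eD, cc]
        rw [if_pos (show 2 ≤ n+3 by omega)]
        rw [show (n+r+6)-3 = n+r+3 by omega, show (n+r+6)-2 = n+r+4 by omega,
          show n+3-0 = n+3 by omega, show n+3-1 = n+2 by omega, show n+3-2 = n+1 by omega,
          show n+3-3 = n by omega,
          show n+r+6+(n+3)-1 = 2*n+r+8 by omega, show n+r+6+(n+3)-2 = 2*n+r+7 by omega,
          show n+r+6+(n+3) = 2*n+r+9 by omega,
          show n+3+0+(n+r+3) = 2*n+r+6 by omega]
        have h1 : (((n+r+6).choose (n+3) : ℕ) : ℚ)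
            = (((n+r+3).choose (n+3) : ℕ) : ℚ)
              * (((n:ℚ)+r+6)*((n:ℚ)+r+5)*((n:ℚ)+r+4)) / (((r:ℚ)+1)*((r:ℚ)+2)*((r:ℚ)+3)) := by
          rw [Nat.cast_choose ℚ (show n+3 ≤ n+r+6 by omega),
            Nat.cast_choose ℚ (show n+3 ≤ n+r+3 by omega),
            show n+r+6-(n+3) = r+3 by omega, show n+r+3-(n+3) = r by omega]
          simp only [fact_shift, Finset.prod_range_succ, Finset.prod_range_zero]
          push_cast
          field_simp
          ring
        have h2 : (((2*n+r+8).choose (n+3) : ℕ) : ℚ)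
            = (((2*n+r+6).choose (n+3) : ℕ) : ℚ)
              * ((2*(n:ℚ)+r+8)*(2*(n:ℚ)+r+7)) / (((n:ℚ)+r+5)*((n:ℚ)+r+4)) := by
          rw [Nat.cast_choose ℚ (show n+3 ≤ 2*n+r+8 by omega),
            Nat.cast_choose ℚ (show n+3 ≤ 2*n+r+6 by omega),
            show 2*n+r+8-(n+3) = n+r+5 by omega, show 2*n+r+6-(n+3) = n+r+3 by omega]
          simp only [fact_shift, Finset.prod_range_succ, Finset.prod_range_zero]
          push_cast
          field_simp
          ring
        have h3 : (((n+r+4).choose (n+1) : ℕ) : ℚ)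
            = (((n+r+3).choose (n+3) : ℕ) : ℚ)
              * (((n:ℚ)+r+4)*((n:ℚ)+3)*((n:ℚ)+2)) / (((r:ℚ)+1)*((r:ℚ)+2)*((r:ℚ)+3)) := by
          rw [Nat.cast_choose ℚ (show n+1 ≤ n+r+4 by omega),
            Nat.cast_choose ℚ (show n+3 ≤ n+r+3 by omega),
            show n+r+4-(n+1) = r+3 by omega, show n+r+3-(n+3) = r by omega]
          simp only [fact_shift, Finset.prod_range_succ, Finset.prod_range_zero]
          push_cast
          field_simp
          ring
        have h4 : (((2*n+r+7).choose (n+3) : ℕ) : ℚ)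
            = (((2*n+r+6).choose (n+3) : ℕ) : ℚ) * (2*(n:ℚ)+r+7) / ((n:ℚ)+r+4) := by
          rw [Nat.cast_choose ℚ (show n+3 ≤ 2*n+r+7 by omega),
            Nat.cast_choose ℚ (show n+3 ≤ 2*n+r+6 by omega),
            show 2*n+r+7-(n+3) = n+r+4 by omega, show 2*n+r+6-(n+3) = n+r+3 by omega]
          simp only [fact_shift, Finset.prod_range_succ, Finset.prod_range_zero]
          push_cast
          field_simp
          ring
        have h5 : (((2*n+r+9).choose (n+3) : ℕ) : ℚ)
            = (((2*n+r+6).choose (n+3) : ℕ) : ℚ)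
              * ((2*(n:ℚ)+r+9)*(2*(n:ℚ)+r+8)*(2*(n:ℚ)+r+7))
                / (((n:ℚ)+r+6)*((n:ℚ)+r+5)*((n:ℚ)+r+4)) := by
          rw [Nat.cast_choose ℚ (show n+3 ≤ 2*n+r+9 by omega),
            Nat.cast_choose ℚ (show n+3 ≤ 2*n+r+6 by omega),
            show 2*n+r+9-(n+3) = n+r+6 by omega, show 2*n+r+6-(n+3) = n+r+3 by omega]
          simp only [fact_shift, Finset.prod_range_succ, Finset.prod_range_zero]
          push_cast
          field_simp
          ring
        have h6 : (((n+r+3).choose (n+2) : ℕ) : ℚ)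
            = (((n+r+3).choose (n+3) : ℕ) : ℚ) * ((n:ℚ)+3) / ((r:ℚ)+1) := by
          rw [Nat.cast_choose ℚ (show n+2 ≤ n+r+3 by omega),
            Nat.cast_choose ℚ (show n+3 ≤ n+r+3 by omega),
            show n+r+3-(n+2) = r+1 by omega, show n+r+3-(n+3) = r by omega]
          simp only [fact_shift, Finset.prod_range_succ, Finset.prod_range_zero]
          push_cast
          field_simp
          ring
        have h7 : (((n+r+3).choose (n+1) : ℕ) : ℚ)
            = (((n+r+3).choose (n+3) : ℕ) : ℚ) * (((n:ℚ)+3)*((n:ℚ)+2)) / (((r:ℚ)+1)*((r:ℚ)+2)) := by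
          rw [Nat.cast_choose ℚ (show n+1 ≤ n+r+3 by omega),
            Nat.cast_choose ℚ (show n+3 ≤ n+r+3 by omega),
            show n+r+3-(n+1) = r+2 by omega, show n+r+3-(n+3) = r by omega]
          simp only [fact_shift, Finset.prod_range_succ, Finset.prod_range_zero]
          push_cast
          field_simp
          ring
        have h8 : (((n+r+3).choose n : ℕ) : ℚ)
            = (((n+r+3).choose (n+3) : ℕ) : ℚ)
              * (((n:ℚ)+3)*((n:ℚ)+2)*((n:ℚ)+1)) / (((r:ℚ)+1)*((r:ℚ)+2)*((r:ℚ)+3)) := by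
          rw [Nat.cast_choose ℚ (show n ≤ n+r+3 by omega),
            Nat.cast_choose ℚ (show n+3 ≤ n+r+3 by omega),
            show n+r+3-n = r+3 by omega, show n+r+3-(n+3) = r by omega]
          simp only [fact_shift, Finset.prod_range_succ, Finset.prod_range_zero]
          push_cast
          field_simp
          ring
        have hD : (((2*n+r+6).descFactorial (n+r+3) : ℕ) : ℚ)
            = (((2*n+r+6).choose (n+3) : ℕ) : ℚ) * (((n+r+4).factorial : ℕ) : ℚ) / ((n:ℚ)+r+4) := by
          rw [desc_cast (show n+r+3 ≤ 2*n+r+6 by omega), show 2*n+r+6-(n+r+3) = n+3 by omega,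
            Nat.cast_choose ℚ (show n+3 ≤ 2*n+r+6 by omega),
            show 2*n+r+6-(n+3) = n+r+3 by omega]
          simp only [fact_shift, Finset.prod_range_succ, Finset.prod_range_zero]
          have := fact_ne (n+3)
          push_cast
          field_simp
          ring
        rw [h1, h2, h3, h4, h5, h6, h7, h8, hD]
        push_cast
        field_simp
        ring
    · have hk2 : k = l - 2 ∨ k = l - 1 ∨ k = l := by omega
      obtain ⟨r, rfl⟩ : ∃ r, l = r + 5 := ⟨l - 5, by omega⟩
      rcases hk2 with hk | hk | hk <;> subst hk
      · rw [if_neg (by omega), if_pos (by omega), if_pos (by omega), if_pos (by omega)]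
        simp only [eD, cc]
        rw [show (r+5)-3 = r+2 by omega, show (r+5)-2 = r+3 by omega]
        rw [if_pos (show 2 ≤ r+3 by omega)]
        rw [show r+3-1 = r+2 by omega, show r+3-2 = r+1 by omega, show r+3-3 = r by omega,
          show r+2+1+(r+2) = 2*r+5 by omega,
          show r+5+(r+3)-1 = 2*r+7 by omega, show r+5+(r+3)-2 = 2*r+6 by omega,
          show r+5+(r+3) = 2*r+8 by omega]
        rw [Nat.choose_self,
          Nat.cast_choose ℚ (show r+3 ≤ r+5 by omega),
          Nat.cast_choose ℚ (show r+3 ≤ 2*r+7 by omega),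
          Nat.cast_choose ℚ (show r+1 ≤ r+3 by omega),
          Nat.cast_choose ℚ (show r+3 ≤ 2*r+6 by omega),
          Nat.cast_choose ℚ (show r+3 ≤ 2*r+8 by omega),
          Nat.cast_choose ℚ (show r+1 ≤ r+2 by omega),
          Nat.cast_choose ℚ (show r ≤ r+2 by omega),
          desc_cast (show r+2 ≤ 2*r+5 by omega),
          show r+5-(r+3) = 2 by omega, show 2*r+7-(r+3) = r+4 by omega,
          show r+3-(r+1) = 2 by omega, show 2*r+6-(r+3) = r+3 by omega,
          show 2*r+8-(r+3) = r+5 by omega, show r+2-(r+1) = 1 by omega,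
          show r+2-r = 2 by omega, show 2*r+5-(r+2) = r+3 by omega]
        simp only [fact_shift, Finset.prod_range_succ, Finset.prod_range_zero]
        have a1 := fact_ne r
        have a2 := fact_ne (2*r)
        have b1 : ((r:ℚ)+1) ≠ 0 := by positivity
        have b2 : ((r:ℚ)+2) ≠ 0 := by positivity
        have b3 : ((r:ℚ)+3) ≠ 0 := by positivity
        have b4 : ((r:ℚ)+4) ≠ 0 := by positivity
        have b5 : ((r:ℚ)+5) ≠ 0 := by positivity
        push_cast
        field_simp
        ring
      · rw [if_neg (by omega), if_neg (by omega), if_pos (by omega), if_pos (by omega)]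
        simp only [eD, cc]
        rw [show (r+5)-3 = r+2 by omega, show (r+5)-2 = r+3 by omega, show (r+5)-1 = r+4 by omega]
        rw [if_pos (show 2 ≤ r+4 by omega)]
        rw [show r+4-2 = r+2 by omega, show r+4-3 = r+1 by omega,
          show r+2+2+(r+2) = 2*r+6 by omega,
          show r+5+(r+4)-1 = 2*r+8 by omega, show r+5+(r+4)-2 = 2*r+7 by omega,
          show r+5+(r+4) = 2*r+9 by omega]
        rw [Nat.choose_self,
          Nat.cast_choose ℚ (show r+4 ≤ r+5 by omega),
          Nat.cast_choose ℚ (show r+4 ≤ 2*r+8 by omega),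
          Nat.cast_choose ℚ (show r+2 ≤ r+3 by omega),
          Nat.cast_choose ℚ (show r+4 ≤ 2*r+7 by omega),
          Nat.cast_choose ℚ (show r+4 ≤ 2*r+9 by omega),
          Nat.cast_choose ℚ (show r+1 ≤ r+2 by omega),
          desc_cast (show r+2 ≤ 2*r+6 by omega),
          show r+5-(r+4) = 1 by omega, show 2*r+8-(r+4) = r+4 by omega,
          show r+3-(r+2) = 1 by omega, show 2*r+7-(r+4) = r+3 by omega,
          show 2*r+9-(r+4) = r+5 by omega, show r+2-(r+1) = 1 by omega,
          show 2*r+6-(r+2) = r+4 by omega]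
        simp only [fact_shift, Finset.prod_range_succ, Finset.prod_range_zero]
        have a1 := fact_ne r
        have a2 := fact_ne (2*r)
        have b1 : ((r:ℚ)+1) ≠ 0 := by positivity
        have b2 : ((r:ℚ)+2) ≠ 0 := by positivity
        have b3 : ((r:ℚ)+3) ≠ 0 := by positivity
        have b4 : ((r:ℚ)+4) ≠ 0 := by positivity
        have b5 : ((r:ℚ)+5) ≠ 0 := by positivity
        push_cast
        field_simp
        ring
      · rw [if_neg (by omega), if_neg (by omega), if_neg (by omega), if_pos (by omega)]
        simp only [eD, cc]
        rw [show (r+5)-3 = r+2 by omega, show (r+5)-2 = r+3 by omega]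
        rw [if_pos (show 2 ≤ r+5 by omega)]
        rw [show r+2+3+(r+2) = 2*r+7 by omega,
          show r+5+(r+5)-1 = 2*r+9 by omega, show r+5+(r+5)-2 = 2*r+8 by omega,
          show r+5+(r+5) = 2*r+10 by omega]
        rw [Nat.choose_self, Nat.choose_self,
          Nat.cast_choose ℚ (show r+5 ≤ 2*r+9 by omega),
          Nat.cast_choose ℚ (show r+5 ≤ 2*r+8 by omega),
          Nat.cast_choose ℚ (show r+5 ≤ 2*r+10 by omega),
          desc_cast (show r+2 ≤ 2*r+7 by omega),
          show 2*r+9-(r+5) = r+4 by omega, show 2*r+8-(r+5) = r+3 by omega,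
          show 2*r+10-(r+5) = r+5 by omega, show 2*r+7-(r+2) = r+5 by omega]
        simp only [fact_shift, Finset.prod_range_succ, Finset.prod_range_zero]
        simp only [Nat.choose_self, Nat.cast_one]
        have a1 := fact_ne r
        have a2 := fact_ne (2*r)
        have b1 : ((r:ℚ)+1) ≠ 0 := by positivity
        have b2 : ((r:ℚ)+2) ≠ 0 := by positivity
        have b3 : ((r:ℚ)+3) ≠ 0 := by positivity
        have b4 : ((r:ℚ)+4) ≠ 0 := by positivity
        have b5 : ((r:ℚ)+5) ≠ 0 := by positivity
        push_cast
        field_simp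
        ring

theorem fDtilde_rodrigues (l : ℕ) (hl : 5 ≤ l) :
    fDtilde l = Polynomial.C (1 / ((l - 2).factorial : ℚ)) *
      (Polynomial.derivative^[l - 3]
        (Polynomial.X ^ (l - 3) * (1 - Polynomial.X) ^ (l - 3) * (1 - 2 * Polynomial.X) *
          (Polynomial.C ((l : ℚ) - 2) - Polynomial.C (3 * (l : ℚ) - 4) * Polynomial.X
            + Polynomial.C (3 * (l : ℚ) - 4) * Polynomial.X ^ 2))) := by
  rw [inner_eq (l : ℚ) (l-3), Polynomial.iterate_derivative_sum]
  simp_rw [Polynomial.iterate_derivative_sum, Polynomial.iterate_derivative_C_mul,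
    Polynomial.iterate_derivative_X_pow_eq_C_mul, Nat.add_sub_cancel, ← mul_assoc,
    ← Polynomial.C_mul]
  rw [fDtilde_sum]
  apply Polynomial.ext
  intro k
  rw [coeff_sum_CX, Polynomial.coeff_C_mul,
    coeff_double (l-3) k (fun i j => (-1:ℚ)^i * (((l-3).choose i : ℕ) : ℚ) * cc (l:ℚ) j
      * (((i + j + (l-3)).descFactorial (l-3) : ℕ) : ℚ))]
  exact key l k hl
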